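/- Let P = P_𝔱 ⊕ P_𝔫 be an endomorphism of 𝔪 = 𝔱 ⊕ 𝔫, where P_𝔱 is a Q-symmetric positive-definite endomorphism of 𝔱 and P_𝔫 is a Q-symmetric positive-definite endomorphism of 𝔫 commuting with ad(k)|_𝔫 for every k ∈ 𝔨. Then the operator S(P) defined by the implicit equation is given explicitly by: S(P)(T).T' = 0; S(P)(T).Y = −[T,Y] + (1/2) P_𝔫⁻¹.[P_𝔱.T, Y]; S(P)(X).T' = −(1/2) P_𝔫⁻¹.[X, P_𝔱.T']; S(P)(X).Y = −(1/2) [X,Y]_𝔪 − (1/2) P_𝔫⁻¹.(([X, P_𝔫.Y])_𝔫 − ([P_𝔫.X, Y])_𝔫), for all T, T' ∈ 𝔱 and X, Y ∈ 𝔫 (here [𝔱,𝔫] ⊆ 𝔫, so all terms are well-defined). -/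

import Mathlib

open scoped RealInnerProductSpace

noncomputable section

variable {G : Type*} [NormedAddCommGroup G] [InnerProductSpace ℝ G] [FiniteDimensional ℝ G]

/-- Orthogonal projection onto the subspace `W`, as a plain map `G → G`. -/
def pr (W : Submodule ℝ G) : G → G := fun v => (Submodule.orthogonalProjection W v : G)

/-- Orthogonal projection onto the subspace `W`, as a continuous linear endomorphism of `G`. -/
def projL (W : Submodule ℝ G) : G →L[ℝ] G := W.subtypeL.comp (Submodule.orthogonalProjection W)

variable (br : G →ₗ[ℝ] G →ₗ[ℝ] G)

/-- `br` is a Lie bracket making `G` a real Lie algebra, and the inner product `Q` of `G`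
is ad-invariant: `Q([Z,X],Y) + Q(X,[Z,Y]) = 0`. -/
structure IsLieQ : Prop where
  alt : ∀ x : G, br x x = 0
  jacobi : ∀ x y z : G, br x (br y z) + br y (br z x) + br z (br x y) = 0
  adInv : ∀ Z X Y : G, ⟪br Z X, Y⟫ + ⟪X, br Z Y⟫ = 0

/-- `𝔥 ⊆ 𝔨` are Lie subalgebras of `𝔤` with `[𝔨,𝔨] ⊆ 𝔥`. -/
structure IsToralPair (𝔥 𝔨 : Submodule ℝ G) : Prop where
  subalg_h : ∀ x ∈ 𝔥, ∀ y ∈ 𝔥, br x y ∈ 𝔥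
  subalg_k : ∀ x ∈ 𝔨, ∀ y ∈ 𝔨, br x y ∈ 𝔨
  h_le_k : 𝔥 ≤ 𝔨
  bk_in_h : ∀ x ∈ 𝔨, ∀ y ∈ 𝔨, br x y ∈ 𝔥

/-- no nonzero element of `𝔫 = 𝔨ᗮ` commutes with all of `𝔨`. -/
def NoTrivial (𝔨 : Submodule ℝ G) : Prop :=
  ∀ X ∈ 𝔨ᗮ, (∀ k ∈ 𝔨, br k X = 0) → X = 0

/-- `A` maps `W` into itself and is `Q`-symmetric on `W`. -/
def SymOn (W : Submodule ℝ G) (A : G →L[ℝ] G) : Prop :=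
  (∀ v ∈ W, A v ∈ W) ∧ ∀ v ∈ W, ∀ w ∈ W, ⟪A v, w⟫ = ⟪v, A w⟫

/-- `A` is positive definite on the subspace `W`. -/
def PosDefOn (W : Submodule ℝ G) (A : G →L[ℝ] G) : Prop :=
  ∀ v ∈ W, v ≠ 0 → 0 < ⟪A v, v⟫

/-- `A` commutes with `ad(k)|_𝔫` on `𝔫 = 𝔨ᗮ`, for every `k ∈ 𝔨`. -/
def CommAd (𝔨 : Submodule ℝ G) (A : G →L[ℝ] G) : Prop :=
  ∀ k ∈ 𝔨, ∀ X ∈ 𝔨ᗮ, A (br k X) = br k (A X)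

/-- `Ainv` maps `W` to itself and is a two-sided inverse of `A` on the subspace `W`. -/
def InvOn' (W : Submodule ℝ G) (A Ainv : G →L[ℝ] G) : Prop :=
  (∀ v ∈ W, Ainv v ∈ W) ∧ (∀ v ∈ W, Ainv (A v) = v) ∧ (∀ v ∈ W, A (Ainv v) = v)

/-- The explicit formula for the extended operator `S(P)(V).W` of the generalized submersion
metric `P = P_𝔱 ⊕ P_𝔫`, where `𝔱 = 𝔨 ⊓ 𝔥ᗮ`, `𝔪 = 𝔥ᗮ`, `𝔫 = 𝔨ᗮ`:
`S(P)(T).T' = 0`, `S(P)(T).Y = -[T,Y] + (1/2) P_𝔫⁻¹.[P_𝔱.T, Y]`,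
`S(P)(X).T' = -(1/2) P_𝔫⁻¹.[X, P_𝔱.T']`,
`S(P)(X).Y = -(1/2)[X,Y]_𝔪 - (1/2) P_𝔫⁻¹.(([X,P_𝔫.Y])_𝔫 - ([P_𝔫.X,Y])_𝔫)`. -/
def Sfun (𝔥 𝔨 : Submodule ℝ G) (pt pn pninv : G →L[ℝ] G) (V W : G) : G :=
  -(br (pr (𝔨 ⊓ 𝔥ᗮ) V) (pr 𝔨ᗮ W)) + (2⁻¹ : ℝ) • pninv (br (pt (pr (𝔨 ⊓ 𝔥ᗮ) V)) (pr 𝔨ᗮ W))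
    - (2⁻¹ : ℝ) • pninv (br (pr 𝔨ᗮ V) (pt (pr (𝔨 ⊓ 𝔥ᗮ) W)))
    - (2⁻¹ : ℝ) • pr 𝔥ᗮ (br (pr 𝔨ᗮ V) (pr 𝔨ᗮ W))
    - (2⁻¹ : ℝ) • pninv (pr 𝔨ᗮ (br (pr 𝔨ᗮ V) (pn (pr 𝔨ᗮ W)))
        - pr 𝔨ᗮ (br (pn (pr 𝔨ᗮ V)) (pr 𝔨ᗮ W)))

/-- The extended curvature `Rm(P)(V₁,V₂).W` of the generalized submersion metric
`P = P_𝔱 ⊕ P_𝔫`: `Rm(P)(V₁,V₂) = ad([V₁,V₂]_𝔥)|_𝔪 - [S(P)(V₁),S(P)(V₂)] - S(P)([V₁,V₂]_𝔪)`. -/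
def Rmfun (𝔥 𝔨 : Submodule ℝ G) (pt pn pninv : G →L[ℝ] G) (V₁ V₂ W : G) : G :=
  br (pr 𝔥 (br V₁ V₂)) W
    - (Sfun br 𝔥 𝔨 pt pn pninv V₁ (Sfun br 𝔥 𝔨 pt pn pninv V₂ W)
        - Sfun br 𝔥 𝔨 pt pn pninv V₂ (Sfun br 𝔥 𝔨 pt pn pninv V₁ W))
    - Sfun br 𝔥 𝔨 pt pn pninv (pr 𝔥ᗮ (br V₁ V₂)) W

/-- `Tr (𝔪 ∋ Z ↦ Rm(P)(V₁, Z).V₂)`, computed via an orthonormal basis of `𝔪 = 𝔥ᗮ`. -/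
def RicBilin (𝔥 𝔨 : Submodule ℝ G) (pt pn pninv : G →L[ℝ] G) (V₁ V₂ : G) : ℝ :=
  ∑ i, ⟪((stdOrthonormalBasis ℝ 𝔥ᗮ) i : G),
        Rmfun br 𝔥 𝔨 pt pn pninv V₁ ((stdOrthonormalBasis ℝ 𝔥ᗮ) i : G) V₂⟫

/-- `Ric` is the extended Ricci endomorphism of the generalized submersion metric
`P = P_𝔱 ⊕ P_𝔫`: it maps `𝔪 = 𝔥ᗮ` to `𝔪`, vanishes on `𝔪ᗮ`, and satisfies
`Q(Ric.V₁, V₂) = Tr(𝔪 ∋ Z ↦ Rm(P)(V₁,Z).V₂)` for all `V₁, V₂ ∈ 𝔪`. -/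
def IsExtRic (𝔥 𝔨 : Submodule ℝ G) (pt pn pninv Ric : G →L[ℝ] G) : Prop :=
  Ric = (projL 𝔥ᗮ).comp (Ric.comp (projL 𝔥ᗮ)) ∧
  ∀ V₁ ∈ 𝔥ᗮ, ∀ V₂ ∈ 𝔥ᗮ, ⟪Ric V₁, V₂⟫ = RicBilin br 𝔥 𝔨 pt pn pninv V₁ V₂

/-- `SN` is the operator `S_N(P_𝔫)` of the base space `N`, relative to the reductive
decomposition `𝔤 = 𝔨 ⊕ 𝔫`, defined by the implicit equation
`-2 Q(S_N(X).Y, Z) = Q([X,Y]_𝔫, Z) + Q([P_𝔫⁻¹.Z, X]_𝔫, P_𝔫.Y) + Q([P_𝔫⁻¹.Z, Y]_𝔫, P_𝔫.X)`. -/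
def IsSN (𝔨 : Submodule ℝ G) (pn pninv : G →L[ℝ] G) (SN : G → G → G) : Prop :=
  (∀ X ∈ 𝔨ᗮ, ∀ Y ∈ 𝔨ᗮ, SN X Y ∈ 𝔨ᗮ) ∧
  ∀ X ∈ 𝔨ᗮ, ∀ Y ∈ 𝔨ᗮ, ∀ Z ∈ 𝔨ᗮ,
    (-2 : ℝ) * ⟪SN X Y, Z⟫ =
      ⟪pr 𝔨ᗮ (br X Y), Z⟫ + ⟪pr 𝔨ᗮ (br (pninv Z) X), pn Y⟫ + ⟪pr 𝔨ᗮ (br (pninv Z) Y), pn X⟫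

/-- The curvature `Rm_N(P_𝔫)(X,Y).W` of the base space `N`:
`Rm_N(X,Y) = ad([X,Y]_𝔨)|_𝔫 - [S_N(X),S_N(Y)] - S_N([X,Y]_𝔫)`. -/
def RmNfun (𝔨 : Submodule ℝ G) (SN : G → G → G) (X Y W : G) : G :=
  br (pr 𝔨 (br X Y)) W - (SN X (SN Y W) - SN Y (SN X W)) - SN (pr 𝔨ᗮ (br X Y)) W

/-- `RicN` is the Ricci endomorphism `Ric_N(P_𝔫)` of the base space `N`, relative to the
operator `SN = S_N(P_𝔫)`: it maps `𝔫 = 𝔨ᗮ` to `𝔫`, vanishes on `𝔫ᗮ`, and satisfies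
`Q(RicN.X, Y) = Tr(𝔫 ∋ Z ↦ Rm_N(X,Z).Y)` for all `X, Y ∈ 𝔫`. -/
def IsBaseRic (𝔨 : Submodule ℝ G) (SN : G → G → G) (RicN : G →L[ℝ] G) : Prop :=
  RicN = (projL 𝔨ᗮ).comp (RicN.comp (projL 𝔨ᗮ)) ∧
  ∀ X ∈ 𝔨ᗮ, ∀ Y ∈ 𝔨ᗮ,
    ⟪RicN X, Y⟫ = ∑ i, ⟪((stdOrthonormalBasis ℝ 𝔨ᗮ) i : G),
      RmNfun br 𝔨 SN X ((stdOrthonormalBasis ℝ 𝔨ᗮ) i : G) Y⟫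


section Aux

lemma pr_mem' (W : Submodule ℝ G) (v : G) : pr W v ∈ W := (Submodule.orthogonalProjection W v).2

lemma pr_eq_self' {W : Submodule ℝ G} {v : G} (h : v ∈ W) : pr W v = v :=
  Submodule.starProjection_eq_self_iff.2 h

lemma pr_eq_zero' {W : Submodule ℝ G} {v : G} (h : v ∈ Wᗮ) : pr W v = 0 := by
  show ((W.orthogonalProjectionOnto v : W) : G) = 0
  rw [Submodule.orthogonalProjectionOnto_apply_of_mem_orthogonal h]; rfl

lemma pr_add' (W : Submodule ℝ G) (a b : G) : pr W (a + b) = pr W a + pr W b := by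
  simp [pr]

lemma inner_pr_left' (W : Submodule ℝ G) (v : G) {w : G} (hw : w ∈ W) :
    ⟪pr W v, w⟫ = ⟪v, w⟫ := by
  have h := Submodule.starProjection_inner_eq_zero v w hw
  rw [inner_sub_left] at h
  have h2 := sub_eq_zero.1 h
  simpa [pr] using h2.symm

lemma inner_pr_right' (W : Submodule ℝ G) (v : G) {w : G} (hw : w ∈ W) :
    ⟪w, pr W v⟫ = ⟪w, v⟫ := by
  rw [real_inner_comm, inner_pr_left' W v hw, real_inner_comm]

lemma eq_of_inner_eq' (W : Submodule ℝ G) {a b : G} (ha : a ∈ W) (hb : b ∈ W)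
    (h : ∀ v ∈ W, ⟪a, v⟫ = ⟪b, v⟫) : a = b := by
  have h2 : ⟪a - b, a - b⟫ = 0 := by
    rw [inner_sub_left, h _ (Submodule.sub_mem W ha hb)]; ring
  exact sub_eq_zero.1 (inner_self_eq_zero.1 h2)

end Aux

/-- the operator `S(P)` of the submersion metric `P = P_𝔱 ⊕ P_𝔫`, defined by the
implicit equation
`-2 Q(S(P)(V₁).V₂, V₃) = Q([V₁,V₂]_𝔪, V₃) + Q([P⁻¹.V₃,V₁]_𝔪, P.V₂) + Q([P⁻¹.V₃,V₂]_𝔪, P.V₁)`,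
is given by the explicit formulas of `Sfun`. Here `𝔱 = 𝔨 ⊓ 𝔥ᗮ`, `𝔪 = 𝔥ᗮ`, `𝔫 = 𝔨ᗮ`,
`P.V = P_𝔱.(V_𝔱) + P_𝔫.(V_𝔫)` and `P⁻¹.V = P_𝔱⁻¹.(V_𝔱) + P_𝔫⁻¹.(V_𝔫)` for `V ∈ 𝔪`. -/
theorem S_of_submersion_metric_explicit
    (hLie : IsLieQ br) (𝔥 𝔨 : Submodule ℝ G) (hpair : IsToralPair br 𝔥 𝔨)
    (pt ptinv pn pninv : G →L[ℝ] G)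
    (hpt : SymOn (𝔨 ⊓ 𝔥ᗮ) pt) (hptpos : PosDefOn (𝔨 ⊓ 𝔥ᗮ) pt)
    (hptinv : InvOn' (𝔨 ⊓ 𝔥ᗮ) pt ptinv)
    (hpn : SymOn 𝔨ᗮ pn) (hpnpos : PosDefOn 𝔨ᗮ pn) (hpncomm : CommAd br 𝔨 pn)
    (hpninv : InvOn' 𝔨ᗮ pn pninv)
    (S : G → G → G)
    (hSmem : ∀ V₁ ∈ 𝔥ᗮ, ∀ V₂ ∈ 𝔥ᗮ, S V₁ V₂ ∈ 𝔥ᗮ)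
    (hSimp : ∀ V₁ ∈ 𝔥ᗮ, ∀ V₂ ∈ 𝔥ᗮ, ∀ V₃ ∈ 𝔥ᗮ,
      (-2 : ℝ) * ⟪S V₁ V₂, V₃⟫ =
        ⟪pr 𝔥ᗮ (br V₁ V₂), V₃⟫
          + ⟪pr 𝔥ᗮ (br (ptinv (pr (𝔨 ⊓ 𝔥ᗮ) V₃) + pninv (pr 𝔨ᗮ V₃)) V₁),
              pt (pr (𝔨 ⊓ 𝔥ᗮ) V₂) + pn (pr 𝔨ᗮ V₂)⟫
          + ⟪pr 𝔥ᗮ (br (ptinv (pr (𝔨 ⊓ 𝔥ᗮ) V₃) + pninv (pr 𝔨ᗮ V₃)) V₂),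
              pt (pr (𝔨 ⊓ 𝔥ᗮ) V₁) + pn (pr 𝔨ᗮ V₁)⟫) :
    (∀ T ∈ 𝔨 ⊓ 𝔥ᗮ, ∀ T' ∈ 𝔨 ⊓ 𝔥ᗮ, S T T' = 0) ∧
    (∀ T ∈ 𝔨 ⊓ 𝔥ᗮ, ∀ Y ∈ 𝔨ᗮ,
      S T Y = -(br T Y) + (2⁻¹ : ℝ) • pninv (br (pt T) Y)) ∧
    (∀ X ∈ 𝔨ᗮ, ∀ T' ∈ 𝔨 ⊓ 𝔥ᗮ,
      S X T' = -((2⁻¹ : ℝ) • pninv (br X (pt T')))) ∧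
    (∀ X ∈ 𝔨ᗮ, ∀ Y ∈ 𝔨ᗮ,
      S X Y = -((2⁻¹ : ℝ) • pr 𝔥ᗮ (br X Y))
        - (2⁻¹ : ℝ) • pninv (pr 𝔨ᗮ (br X (pn Y)) - pr 𝔨ᗮ (br (pn X) Y))) := by
  classical
  have hnm : 𝔨ᗮ ≤ 𝔥ᗮ := Submodule.orthogonal_le hpair.h_le_k
  have htk : 𝔨 ⊓ 𝔥ᗮ ≤ 𝔨 := inf_le_left
  have htm : 𝔨 ⊓ 𝔥ᗮ ≤ 𝔥ᗮ := inf_le_right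
  have hnt : 𝔨ᗮ ≤ (𝔨 ⊓ 𝔥ᗮ)ᗮ := Submodule.orthogonal_le htk
  have hkn : 𝔨 ≤ 𝔨ᗮᗮ := Submodule.le_orthogonal_orthogonal 𝔨
  have hhm : 𝔥 ≤ 𝔥ᗮᗮ := Submodule.le_orthogonal_orthogonal 𝔥
  have ad1 : ∀ Z X Y : G, ⟪br Z X, Y⟫ = -⟪X, br Z Y⟫ := by
    intro Z X Y; linarith [hLie.adInv Z X Y]
  have bswap : ∀ x y : G, br x y = -br y x := by
    intro x y
    have h := hLie.alt (x + y)
    simp only [map_add, LinearMap.add_apply, hLie.alt, zero_add, add_zero] at h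
    rw [add_comm] at h
    exact eq_neg_of_add_eq_zero_left h
  have brkk : ∀ {k k' : G}, k ∈ 𝔨 → k' ∈ 𝔨 → pr 𝔥ᗮ (br k k') = 0 := by
    intro k k' hk hk'
    exact pr_eq_zero' (hhm (hpair.bk_in_h _ hk _ hk'))
  have brkn : ∀ {k X : G}, k ∈ 𝔨 → X ∈ 𝔨ᗮ → br k X ∈ 𝔨ᗮ := by
    intro k X hk hX
    rw [Submodule.mem_orthogonal]
    intro u hu
    have h1 := ad1 k u X
    have h0 : ⟪br k u, X⟫ = 0 :=
      Submodule.inner_right_of_mem_orthogonal (hpair.subalg_k _ hk _ hu) hX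
    linarith
  have brnk : ∀ {k X : G}, k ∈ 𝔨 → X ∈ 𝔨ᗮ → br X k ∈ 𝔨ᗮ := by
    intro k X hk hX
    rw [bswap]; exact Submodule.neg_mem _ (brkn hk hX)
  have pninv_sym : ∀ a ∈ 𝔨ᗮ, ∀ b ∈ 𝔨ᗮ, ⟪pninv a, b⟫ = ⟪a, pninv b⟫ := by
    intro a ha b hb
    have h1 : pninv a ∈ 𝔨ᗮ := hpninv.1 a ha
    have h2 : pninv b ∈ 𝔨ᗮ := hpninv.1 b hb
    calc ⟪pninv a, b⟫ = ⟪pninv a, pn (pninv b)⟫ := by rw [hpninv.2.2 b hb]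
      _ = ⟪pn (pninv a), pninv b⟫ := (hpn.2 _ h1 _ h2).symm
      _ = ⟪a, pninv b⟫ := by rw [hpninv.2.2 a ha]
  have prT : ∀ V ∈ 𝔥ᗮ, pr (𝔨 ⊓ 𝔥ᗮ) V = pr 𝔨 V := by
    intro V hV
    have hsum := Submodule.starProjection_add_starProjection_orthogonal (K := 𝔨) V
    have hmem : pr 𝔨 V ∈ 𝔨 ⊓ 𝔥ᗮ := by
      refine ⟨pr_mem' _ _, ?_⟩
      have h3 : pr 𝔨 V = V - pr 𝔨ᗮ V := by
        rw [eq_sub_iff_add_eq]; exact hsum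
      rw [h3]
      exact Submodule.sub_mem _ hV (hnm (pr_mem' _ _))
    exact Submodule.eq_starProjection_of_mem_of_inner_eq_zero hmem
      (fun w hw => Submodule.starProjection_inner_eq_zero V w hw.1)
  have hdec : ∀ V ∈ 𝔥ᗮ, pr (𝔨 ⊓ 𝔥ᗮ) V + pr 𝔨ᗮ V = V := by
    intro V hV
    rw [prT V hV]
    exact Submodule.starProjection_add_starProjection_orthogonal (K := 𝔨) V
  refine ⟨?_, ?_, ?_, ?_⟩
  · -- case T T'
    intro T hT T' hT'
    have hTk := htk hT; have hT'k := htk hT'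
    refine eq_of_inner_eq' 𝔥ᗮ (hSmem T (htm hT) T' (htm hT')) (Submodule.zero_mem _) ?_
    intro V₃ hV₃
    have hS := hSimp T (htm hT) T' (htm hT') V₃ hV₃
    rw [pr_eq_self' hT, pr_eq_self' hT', pr_eq_zero' (hkn hTk), pr_eq_zero' (hkn hT'k)] at hS
    simp only [map_zero, add_zero] at hS
    set T₃ := pr (𝔨 ⊓ 𝔥ᗮ) V₃ with hT₃def
    set Y₃ := pr 𝔨ᗮ V₃ with hY₃def
    have hT₃ : T₃ ∈ 𝔨 ⊓ 𝔥ᗮ := pr_mem' _ _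
    have hY₃ : Y₃ ∈ 𝔨ᗮ := pr_mem' _ _
    have hA' : ptinv T₃ ∈ 𝔨 := htk (hptinv.1 _ hT₃)
    have hB' : pninv Y₃ ∈ 𝔨ᗮ := hpninv.1 _ hY₃
    have hsplit : ∀ t : G, br (ptinv T₃ + pninv Y₃) t = br (ptinv T₃) t + br (pninv Y₃) t := by
      intro t; rw [map_add, LinearMap.add_apply]
    have hterm : ∀ t ∈ 𝔨 ⊓ 𝔥ᗮ, ∀ t' ∈ 𝔨 ⊓ 𝔥ᗮ,
        ⟪pr 𝔥ᗮ (br (ptinv T₃ + pninv Y₃) t), pt t'⟫ = 0 := by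
      intro t ht t' ht'
      rw [hsplit, pr_add', brkk hA' (htk ht), zero_add,
        pr_eq_self' (hnm (brnk (htk ht) hB'))]
      exact Submodule.inner_left_of_mem_orthogonal (htk (hpt.1 _ ht')) (brnk (htk ht) hB')
    rw [brkk hTk hT'k, hterm T hT T' hT', hterm T' hT' T hT] at hS
    simp only [inner_zero_left, add_zero, zero_add] at hS ⊢
    linarith
  · -- case T Y
    intro T hT Y hY
    have hTk := htk hT
    have hbrTY : br T Y ∈ 𝔨ᗮ := brkn hTk hY
    have hptT : pt T ∈ 𝔨 ⊓ 𝔥ᗮ := hpt.1 T hT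
    have hbrptTY : br (pt T) Y ∈ 𝔨ᗮ := brkn (htk hptT) hY
    have hEmem : -(br T Y) + (2⁻¹ : ℝ) • pninv (br (pt T) Y) ∈ 𝔥ᗮ :=
      Submodule.add_mem _ (Submodule.neg_mem _ (hnm hbrTY))
        (Submodule.smul_mem _ _ (hnm (hpninv.1 _ hbrptTY)))
    refine eq_of_inner_eq' 𝔥ᗮ (hSmem T (htm hT) Y (hnm hY)) hEmem ?_
    intro V₃ hV₃
    have hS := hSimp T (htm hT) Y (hnm hY) V₃ hV₃
    rw [pr_eq_self' hT, pr_eq_zero' (hkn hTk), pr_eq_self' hY, pr_eq_zero' (hnt hY)] at hS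
    simp only [map_zero, add_zero, zero_add] at hS
    set T₃ := pr (𝔨 ⊓ 𝔥ᗮ) V₃ with hT₃def
    set Y₃ := pr 𝔨ᗮ V₃ with hY₃def
    have hT₃ : T₃ ∈ 𝔨 ⊓ 𝔥ᗮ := pr_mem' _ _
    have hY₃ : Y₃ ∈ 𝔨ᗮ := pr_mem' _ _
    have hdecV : T₃ + Y₃ = V₃ := hdec V₃ hV₃
    have hnV : ∀ x ∈ 𝔨ᗮ, ⟪x, V₃⟫ = ⟪x, Y₃⟫ := by
      intro x hx
      rw [← hdecV, inner_add_right,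
        Submodule.inner_left_of_mem_orthogonal (htk hT₃) hx, zero_add]
    have hA' : ptinv T₃ ∈ 𝔨 := htk (hptinv.1 _ hT₃)
    have hB' : pninv Y₃ ∈ 𝔨ᗮ := hpninv.1 _ hY₃
    have hsplit : ∀ t : G, br (ptinv T₃ + pninv Y₃) t = br (ptinv T₃) t + br (pninv Y₃) t := by
      intro t; rw [map_add, LinearMap.add_apply]
    -- term A
    have hA : ⟪pr 𝔥ᗮ (br T Y), V₃⟫ = ⟪br T Y, Y₃⟫ := by
      rw [pr_eq_self' (hnm hbrTY)]; exact hnV _ hbrTY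
    -- term B
    have hB : ⟪pr 𝔥ᗮ (br (ptinv T₃ + pninv Y₃) T), pn Y⟫ = ⟪br T Y, Y₃⟫ := by
      rw [hsplit, pr_add', brkk hA' hTk, zero_add, pr_eq_self' (hnm (brnk hTk hB'))]
      have e1 : br (pninv Y₃) T = -br T (pninv Y₃) := bswap _ _
      rw [e1, inner_neg_left]
      have e2 : ⟪br T (pninv Y₃), pn Y⟫ = -⟪pninv Y₃, br T (pn Y)⟫ := ad1 T _ _
      rw [e2, neg_neg, ← hpncomm T hTk Y hY,
        ← hpn.2 _ hB' _ hbrTY, hpninv.2.2 _ hY₃, real_inner_comm Y₃]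
    -- term C
    have hC : ⟪pr 𝔥ᗮ (br (ptinv T₃ + pninv Y₃) Y), pt T⟫ = -⟪pninv (br (pt T) Y), Y₃⟫ := by
      rw [hsplit, pr_add', inner_add_left,
        pr_eq_self' (hnm (brkn hA' hY)),
        Submodule.inner_left_of_mem_orthogonal (htk hptT) (brkn hA' hY), zero_add,
        inner_pr_left' 𝔥ᗮ _ (htm hptT)]
      have e1 : ⟪br (pninv Y₃) Y, pt T⟫ = -⟪Y, br (pninv Y₃) (pt T)⟫ := ad1 _ _ _
      rw [e1, bswap (pninv Y₃) (pt T), inner_neg_right, neg_neg]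
      have e2 : ⟪Y, br (pt T) (pninv Y₃)⟫ = -⟪br (pt T) Y, pninv Y₃⟫ := by
        have := ad1 (pt T) Y (pninv Y₃); linarith
      rw [e2, ← pninv_sym _ hbrptTY _ hY₃]
    rw [hA, hB, hC] at hS
    rw [inner_add_left, inner_neg_left, real_inner_smul_left,
      hnV _ hbrTY, hnV _ (hpninv.1 _ hbrptTY)]
    linarith
  · -- case X T'
    intro X hX T' hT'
    have hT'k := htk hT'
    have hptT' : pt T' ∈ 𝔨 ⊓ 𝔥ᗮ := hpt.1 T' hT'
    have hbrXptT' : br X (pt T') ∈ 𝔨ᗮ := brnk (htk hptT') hX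
    have hEmem : -((2⁻¹ : ℝ) • pninv (br X (pt T'))) ∈ 𝔥ᗮ :=
      Submodule.neg_mem _ (Submodule.smul_mem _ _ (hnm (hpninv.1 _ hbrXptT')))
    refine eq_of_inner_eq' 𝔥ᗮ (hSmem X (hnm hX) T' (htm hT')) hEmem ?_
    intro V₃ hV₃
    have hS := hSimp X (hnm hX) T' (htm hT') V₃ hV₃
    rw [pr_eq_self' hT', pr_eq_zero' (hkn hT'k), pr_eq_self' hX, pr_eq_zero' (hnt hX)] at hS
    simp only [map_zero, add_zero, zero_add] at hS
    set T₃ := pr (𝔨 ⊓ 𝔥ᗮ) V₃ with hT₃def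
    set Y₃ := pr 𝔨ᗮ V₃ with hY₃def
    have hT₃ : T₃ ∈ 𝔨 ⊓ 𝔥ᗮ := pr_mem' _ _
    have hY₃ : Y₃ ∈ 𝔨ᗮ := pr_mem' _ _
    have hdecV : T₃ + Y₃ = V₃ := hdec V₃ hV₃
    have hnV : ∀ x ∈ 𝔨ᗮ, ⟪x, V₃⟫ = ⟪x, Y₃⟫ := by
      intro x hx
      rw [← hdecV, inner_add_right,
        Submodule.inner_left_of_mem_orthogonal (htk hT₃) hx, zero_add]
    have hA' : ptinv T₃ ∈ 𝔨 := htk (hptinv.1 _ hT₃)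
    have hB' : pninv Y₃ ∈ 𝔨ᗮ := hpninv.1 _ hY₃
    have hsplit : ∀ t : G, br (ptinv T₃ + pninv Y₃) t = br (ptinv T₃) t + br (pninv Y₃) t := by
      intro t; rw [map_add, LinearMap.add_apply]
    have hbrXT' : br X T' ∈ 𝔨ᗮ := brnk hT'k hX
    -- term A
    have hA : ⟪pr 𝔥ᗮ (br X T'), V₃⟫ = ⟪br X T', Y₃⟫ := by
      rw [pr_eq_self' (hnm hbrXT')]; exact hnV _ hbrXT'
    -- term B : ⟪pr 𝔥ᗮ (br (P⁻¹V₃) X), pt T'⟫ = ⟪pninv (br X (pt T')), Y₃⟫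
    have hB : ⟪pr 𝔥ᗮ (br (ptinv T₃ + pninv Y₃) X), pt T'⟫ = ⟪pninv (br X (pt T')), Y₃⟫ := by
      rw [hsplit, pr_add', inner_add_left,
        pr_eq_self' (hnm (brkn hA' hX)),
        Submodule.inner_left_of_mem_orthogonal (htk hptT') (brkn hA' hX), zero_add,
        inner_pr_left' 𝔥ᗮ _ (htm hptT')]
      have e1 : ⟪br (pninv Y₃) X, pt T'⟫ = -⟪X, br (pninv Y₃) (pt T')⟫ := ad1 _ _ _
      rw [e1, bswap (pninv Y₃) (pt T'), inner_neg_right, neg_neg]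
      have e2 : ⟪X, br (pt T') (pninv Y₃)⟫ = -⟪br (pt T') X, pninv Y₃⟫ := by
        have := ad1 (pt T') X (pninv Y₃); linarith
      rw [e2, bswap (pt T') X, inner_neg_left, neg_neg,
        ← pninv_sym _ hbrXptT' _ hY₃]
    -- term C : ⟪pr 𝔥ᗮ (br (P⁻¹V₃) T'), pn X⟫ = -⟪br X T', Y₃⟫
    have hC : ⟪pr 𝔥ᗮ (br (ptinv T₃ + pninv Y₃) T'), pn X⟫ = -⟪br X T', Y₃⟫ := by
      rw [hsplit, pr_add', brkk hA' hT'k, zero_add,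
        pr_eq_self' (hnm (brnk hT'k hB'))]
      have e1 : br (pninv Y₃) T' = -br T' (pninv Y₃) := bswap _ _
      rw [e1, inner_neg_left]
      have e2 : ⟪br T' (pninv Y₃), pn X⟫ = -⟪pninv Y₃, br T' (pn X)⟫ := ad1 T' _ _
      rw [e2, neg_neg, ← hpncomm T' hT'k X hX,
        ← hpn.2 _ hB' _ (brkn hT'k hX), hpninv.2.2 _ hY₃,
        bswap T' X, inner_neg_right, real_inner_comm Y₃]
    rw [hA, hB, hC] at hS
    rw [inner_neg_left, real_inner_smul_left, hnV _ (hpninv.1 _ hbrXptT')]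
    linarith
  · -- case X Y
    intro X hX Y hY
    have hpnY : pn Y ∈ 𝔨ᗮ := hpn.1 Y hY
    have hpnX : pn X ∈ 𝔨ᗮ := hpn.1 X hX
    have hEmem : -((2⁻¹ : ℝ) • pr 𝔥ᗮ (br X Y))
        - (2⁻¹ : ℝ) • pninv (pr 𝔨ᗮ (br X (pn Y)) - pr 𝔨ᗮ (br (pn X) Y)) ∈ 𝔥ᗮ := by
      refine Submodule.sub_mem _ (Submodule.neg_mem _ (Submodule.smul_mem _ _ (pr_mem' _ _)))
        (Submodule.smul_mem _ _ (hnm (hpninv.1 _ ?_)))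
      exact Submodule.sub_mem _ (pr_mem' _ _) (pr_mem' _ _)
    refine eq_of_inner_eq' 𝔥ᗮ (hSmem X (hnm hX) Y (hnm hY)) hEmem ?_
    intro V₃ hV₃
    have hS := hSimp X (hnm hX) Y (hnm hY) V₃ hV₃
    rw [pr_eq_self' hX, pr_eq_zero' (hnt hX), pr_eq_self' hY, pr_eq_zero' (hnt hY)] at hS
    simp only [map_zero, zero_add] at hS
    set T₃ := pr (𝔨 ⊓ 𝔥ᗮ) V₃ with hT₃def
    set Y₃ := pr 𝔨ᗮ V₃ with hY₃def
    have hT₃ : T₃ ∈ 𝔨 ⊓ 𝔥ᗮ := pr_mem' _ _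
    have hY₃ : Y₃ ∈ 𝔨ᗮ := pr_mem' _ _
    have hdecV : T₃ + Y₃ = V₃ := hdec V₃ hV₃
    have hnV : ∀ x ∈ 𝔨ᗮ, ⟪x, V₃⟫ = ⟪x, Y₃⟫ := by
      intro x hx
      rw [← hdecV, inner_add_right,
        Submodule.inner_left_of_mem_orthogonal (htk hT₃) hx, zero_add]
    have hA' : ptinv T₃ ∈ 𝔨 := htk (hptinv.1 _ hT₃)
    have hB' : pninv Y₃ ∈ 𝔨ᗮ := hpninv.1 _ hY₃
    have hsplit : ∀ t : G, br (ptinv T₃ + pninv Y₃) t = br (ptinv T₃) t + br (pninv Y₃) t := by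
      intro t; rw [map_add, LinearMap.add_apply]
    -- b-terms
    have hb : ∀ U ∈ 𝔨ᗮ, ∀ V ∈ 𝔨ᗮ,
        ⟪br (pninv Y₃) U, pn V⟫ = ⟪pninv (pr 𝔨ᗮ (br U (pn V))), Y₃⟫ := by
      intro U hU V hV
      rw [bswap (pninv Y₃) U, inner_neg_left]
      have e1 : ⟪br U (pninv Y₃), pn V⟫ = -⟪pninv Y₃, br U (pn V)⟫ := ad1 U _ _
      rw [e1, neg_neg, ← inner_pr_right' 𝔨ᗮ (br U (pn V)) hB',
        pninv_sym _ hY₃ _ (pr_mem' _ _), real_inner_comm]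
    -- a-term cancellation
    have ha : ⟪br (ptinv T₃) X, pn Y⟫ + ⟪br (ptinv T₃) Y, pn X⟫ = 0 := by
      have e1 : ⟪br (ptinv T₃) X, pn Y⟫ = -⟪X, br (ptinv T₃) (pn Y)⟫ := ad1 _ _ _
      rw [e1, ← hpncomm _ hA' Y hY, ← hpn.2 X hX _ (brkn hA' hY), real_inner_comm (pn X)]
      ring
    -- assemble term B
    have hB : ⟪pr 𝔥ᗮ (br (ptinv T₃ + pninv Y₃) X), pn Y⟫
        = ⟪br (ptinv T₃) X, pn Y⟫ + ⟪pninv (pr 𝔨ᗮ (br X (pn Y))), Y₃⟫ := by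
      rw [hsplit, pr_add', inner_add_left, pr_eq_self' (hnm (brkn hA' hX)),
        inner_pr_left' 𝔥ᗮ _ (hnm hpnY), hb X hX Y hY]
    have hC : ⟪pr 𝔥ᗮ (br (ptinv T₃ + pninv Y₃) Y), pn X⟫
        = ⟪br (ptinv T₃) Y, pn X⟫ + ⟪pninv (pr 𝔨ᗮ (br Y (pn X))), Y₃⟫ := by
      rw [hsplit, pr_add', inner_add_left, pr_eq_self' (hnm (brkn hA' hY)),
        inner_pr_left' 𝔥ᗮ _ (hnm hpnX), hb Y hY X hX]
    rw [hB, hC] at hS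
    have hflip : pninv (pr 𝔨ᗮ (br Y (pn X))) = -pninv (pr 𝔨ᗮ (br (pn X) Y)) := by
      rw [bswap Y (pn X)]
      have : pr 𝔨ᗮ (-br (pn X) Y) = -pr 𝔨ᗮ (br (pn X) Y) := by simp [pr]
      rw [this, map_neg]
    rw [hflip, inner_neg_left] at hS
    have hmemsub : pninv (pr 𝔨ᗮ (br X (pn Y)) - pr 𝔨ᗮ (br (pn X) Y)) ∈ 𝔨ᗮ :=
      hpninv.1 _ (Submodule.sub_mem _ (pr_mem' _ _) (pr_mem' _ _))
    rw [inner_sub_left, inner_neg_left, real_inner_smul_left, real_inner_smul_left,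
      hnV _ hmemsub]
    rw [map_sub, inner_sub_left]
    linarith [ha, hS]
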